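/- Let M be a positive integer and let Ω₁, Ω₂ ∈ ℂ^{M×M} be Hermitian positive definite. Then there is exactly one Hermitian positive definite matrix X ∈ ℂ^{M×M} satisfying the algebraic Riccati equation X Ω₁⁻¹ X = Ω₂; that is, if X and Y are both Hermitian positive definite with X Ω₁⁻¹ X = Ω₂ and Y Ω₁⁻¹ Y = Ω₂, then X = Y. -/

import Mathlib

open Matrix ComplexOrder
open scoped MatrixOrder

theorem stmt_13 (M : ℕ) (hM : 0 < M)
    (Ω₁ Ω₂ : Matrix (Fin M) (Fin M) ℂ) (h₁ : Ω₁.PosDef) (h₂ : Ω₂.PosDef)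
    (X Y : Matrix (Fin M) (Fin M) ℂ) (hX : X.PosDef) (hY : Y.PosDef)
    (hXr : X * Ω₁⁻¹ * X = Ω₂) (hYr : Y * Ω₁⁻¹ * Y = Ω₂) :
    X = Y := by
  have hA : (Ω₁⁻¹).PosDef := h₁.inv
  set S := CFC.sqrt (Ω₁⁻¹) with hSdef
  have hS : S.PosSemidef := Matrix.nonneg_iff_posSemidef.1 (CFC.sqrt_nonneg _)
  have hSS : S * S = Ω₁⁻¹ := CFC.sqrt_mul_sqrt_self _ hA.posSemidef.nonneg
  have hSH : Sᴴ = S := hS.1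
  have hB : (S * X * S).PosSemidef := by
    have := hX.posSemidef.mul_mul_conjTranspose_same S
    rwa [hSH] at this
  have hC : (S * Y * S).PosSemidef := by
    have := hY.posSemidef.mul_mul_conjTranspose_same S
    rwa [hSH] at this
  have key : X * (S * S) * X = Y * (S * S) * Y := by
    rw [hSS, hXr, hYr]
  have hsq : (S * X * S) ^ 2 = (S * Y * S) ^ 2 := by
    simp only [pow_two]
    calc S * X * S * (S * X * S) = S * (X * (S * S) * X) * S := by
          noncomm_ring
      _ = S * (Y * (S * S) * Y) * S := by rw [key]
      _ = S * Y * S * (S * Y * S) := by noncomm_ring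
  have hBC : S * X * S = S * Y * S := by
    rw [← CFC.sqrt_sq (S * X * S) hB.nonneg, hsq, CFC.sqrt_sq _ hC.nonneg]
  have hdetS : IsUnit S := by
    apply (Matrix.isUnit_iff_isUnit_det _).2
    have : S.det * S.det = (Ω₁⁻¹).det := by rw [← Matrix.det_mul, hSS]
    have h0 : (Ω₁⁻¹).det ≠ 0 := hA.det_pos.ne'
    rw [← this] at h0
    exact (IsUnit.mul_iff.1 (Ne.isUnit h0)).1
  haveI := hdetS.invertible
  calc X = S⁻¹ * (S * X * S) * S⁻¹ := by
        rw [Matrix.mul_assoc, Matrix.mul_assoc, Matrix.mul_nonsing_inv _ ((Matrix.isUnit_iff_isUnit_det _).1 hdetS), Matrix.mul_one, ← Matrix.mul_assoc, Matrix.nonsing_inv_mul _ ((Matrix.isUnit_iff_isUnit_det _).1 hdetS), Matrix.one_mul]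
    _ = S⁻¹ * (S * Y * S) * S⁻¹ := by rw [hBC]
    _ = Y := by
        rw [Matrix.mul_assoc, Matrix.mul_assoc, Matrix.mul_nonsing_inv _ ((Matrix.isUnit_iff_isUnit_det _).1 hdetS), Matrix.mul_one, ← Matrix.mul_assoc, Matrix.nonsing_inv_mul _ ((Matrix.isUnit_iff_isUnit_det _).1 hdetS), Matrix.one_mul]
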